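/- Let C be a smashing triangulated category satisfying the Brown representability property (every cohomological functor C^op → Ab converting coproducts into products is representable), and let w be a smashing weight structure on C. Then there exists a t-structure t on C right adjacent to w, i.e., with C_{t≥0} = C_{w≥0}. -/

import Mathlib

open CategoryTheory Category Limits Pretriangulated ZeroObject Opposite

universe v u u₂ v₂

variable (C : Type u) [Category.{v} C] [Preadditive C] [HasZeroObject C]
  [HasShift C ℤ] [∀ n : ℤ, (CategoryTheory.shiftFunctor C n).Additive] [Pretriangulated C]

/-- `X` is a retract (direct summand) of `Y`. -/
def IsRetract {C : Type u} [Category.{v} C] (X Y : C) : Prop :=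
  ∃ (s : X ⟶ Y) (r : Y ⟶ X), s ≫ r = 𝟙 X

/-- A weight structure on a pretriangulated category `C`, in the homological convention:
`le` is the class `C_{w≤0}` and `ge` is the class `C_{w≥0}`. -/
structure WeightStructure where
  le : Set C
  ge : Set C
  le_retract : ∀ ⦃X Y : C⦄, IsRetract X Y → Y ∈ le → X ∈ le
  ge_retract : ∀ ⦃X Y : C⦄, IsRetract X Y → Y ∈ ge → X ∈ ge
  le_shift : ∀ X : C, X ∈ le → X⟦(-1 : ℤ)⟧ ∈ le
  ge_shift : ∀ X : C, X ∈ ge → X⟦(1 : ℤ)⟧ ∈ ge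
  orth : ∀ ⦃X Y : C⦄, X ∈ le → Y ∈ ge → ∀ f : X ⟶ Y⟦(1 : ℤ)⟧, f = 0
  decomp : ∀ M : C, ∃ (L R : C) (f : L ⟶ M) (g : M ⟶ R) (h : R ⟶ L⟦(1 : ℤ)⟧),
    Triangle.mk f g h ∈ (distTriang C) ∧ L ∈ le ∧ R⟦(-1 : ℤ)⟧ ∈ ge

/-- A t-structure on a pretriangulated category `C`, in the homological convention:
`le` is the class `C_{t≤0}` and `ge` is the class `C_{t≥0}`. -/
structure HomTStructure where
  le : Set C
  ge : Set C
  le_iso : ∀ ⦃X Y : C⦄, (X ≅ Y) → Y ∈ le → X ∈ le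
  ge_iso : ∀ ⦃X Y : C⦄, (X ≅ Y) → Y ∈ ge → X ∈ ge
  le_shift : ∀ X : C, X ∈ le → X⟦(-1 : ℤ)⟧ ∈ le
  ge_shift : ∀ X : C, X ∈ ge → X⟦(1 : ℤ)⟧ ∈ ge
  orth : ∀ ⦃X Y : C⦄, X⟦(-1 : ℤ)⟧ ∈ ge → Y ∈ le → ∀ f : X ⟶ Y, f = 0
  decomp : ∀ M : C, ∃ (L R : C) (f : L ⟶ M) (g : M ⟶ R) (h : R ⟶ L⟦(1 : ℤ)⟧),
    Triangle.mk f g h ∈ (distTriang C) ∧ L ∈ ge ∧ R⟦(1 : ℤ)⟧ ∈ le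

/-- A contravariant additive functor is cohomological if it sends distinguished
triangles to exact sequences. -/
def IsCohomological {A : Type u₂} [Category.{v₂} A] [Abelian A]
    (H : Cᵒᵖ ⥤ A) [H.Additive] : Prop :=
  ∀ (T : Triangle C), ∀ hT : T ∈ distTriang C,
    (ShortComplex.mk (H.map T.mor₂.op) (H.map T.mor₁.op) (by
      rw [← H.map_comp, ← op_comp, comp_distTriang_mor_zero₁₂ _ hT, op_zero, H.map_zero])).Exact

namespace RightAdjacentAux

variable {C}
variable (w : WeightStructure C)

lemma mem_le_iso {X Y : C} (e : X ≅ Y) (h : Y ∈ w.le) : X ∈ w.le :=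
  w.le_retract ⟨e.hom, e.inv, e.hom_inv_id⟩ h

lemma mem_ge_iso {X Y : C} (e : X ≅ Y) (h : Y ∈ w.ge) : X ∈ w.ge :=
  w.ge_retract ⟨e.hom, e.inv, e.hom_inv_id⟩ h

lemma ge_shift_nonneg {G : C} (h : G ∈ w.ge) : ∀ (n : ℤ), 0 ≤ n → G⟦n⟧ ∈ w.ge := by
  intro n hn
  obtain ⟨m, rfl⟩ := Int.eq_ofNat_of_zero_le hn
  induction m with
  | zero => exact mem_ge_iso w ((shiftFunctorZero C ℤ).app G) h
  | succ m ih =>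
      exact mem_ge_iso w
        ((shiftFunctorAdd' C (m : ℤ) 1 ((m+1 : ℕ) : ℤ) (by push_cast; ring)).app G)
        (w.ge_shift _ (ih (by positivity)))

/-- The master orthogonality lemma. -/
lemma zmaster {A G : C} {p q : ℤ} (hA : A⟦p⟧ ∈ w.le) (hG : G⟦q⟧ ∈ w.ge)
    (hpq : q < p) (f : A ⟶ G) : f = 0 := by
  have h1 : q + (p - q) = p := by ring
  have h2 : (p - q - 1) + 1 = p - q := by ring
  have hG' : (G⟦q⟧)⟦p - q - 1⟧ ∈ w.ge := ge_shift_nonneg w hG _ (by omega)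
  set c : G⟦p⟧ ≅ ((G⟦q⟧)⟦p - q - 1⟧)⟦(1:ℤ)⟧ :=
    Iso.trans ((shiftFunctorAdd' C q (p-q) p h1).app G)
      ((shiftFunctorAdd' C (p-q-1) 1 (p-q) h2).app (G⟦q⟧)) with hc
  have hv : (shiftFunctor C p).map f ≫ c.hom = 0 := w.orth hA hG' _
  have hfp : (shiftFunctor C p).map f = 0 := by
    have : (shiftFunctor C p).map f = ((shiftFunctor C p).map f ≫ c.hom) ≫ c.inv := by
      rw [Category.assoc, c.hom_inv_id, Category.comp_id]
    rw [hv, zero_comp] at this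
    exact this
  exact (shiftFunctor C p).map_injective (by simpa using hfp)

/-- A weight decomposition of `X` at level `p`. -/
structure Dec (p : ℤ) (X : C) where
  A : C
  B : C
  α : A ⟶ X
  β : X ⟶ B
  δ : B ⟶ A⟦(1:ℤ)⟧
  dist : Triangle.mk α β δ ∈ distTriang C
  hA : A⟦p⟧ ∈ w.le
  hB : B⟦p - 1⟧ ∈ w.ge

/-- Shifting a decomposition of `X⟦1⟧` at level `p` into one of `X` at level `p+1`. -/
noncomputable def Dec.ofShift {p : ℤ} {X : C} (d : Dec w p (X⟦(1:ℤ)⟧)) : Dec w (p+1) X := by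
  set T₀ : Triangle C := Triangle.mk d.α d.β d.δ
  set T' : Triangle C := T₀.invRotate.invRotate.invRotate with hT'
  have hdist : T' ∈ distTriang C :=
    inv_rot_of_distTriang _ (inv_rot_of_distTriang _ (inv_rot_of_distTriang _ d.dist))
  have e2 : T'.obj₂ = (X⟦(1:ℤ)⟧)⟦(-1:ℤ)⟧ := rfl
  set ν : X ≅ (X⟦(1:ℤ)⟧)⟦(-1:ℤ)⟧ := (shiftEquiv C (1 : ℤ)).unitIso.app X with hν
  refine
    { A := d.A⟦(-1:ℤ)⟧
      B := d.B⟦(-1:ℤ)⟧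
      α := T'.mor₁ ≫ ν.inv
      β := ν.hom ≫ T'.mor₂
      δ := T'.mor₃
      dist := ?_
      hA := ?_
      hB := ?_ }
  · exact isomorphic_distinguished _ hdist _
      (Triangle.isoMk _ T' (Iso.refl _) ν (Iso.refl _)
        (by change (T'.mor₁ ≫ ν.inv) ≫ ν.hom = 𝟙 T'.obj₁ ≫ T'.mor₁
            exact (Category.assoc _ _ _).trans ((congrArg (T'.mor₁ ≫ ·) ν.inv_hom_id).trans
              ((Category.comp_id _).trans (Category.id_comp _).symm)))
        (by exact Category.comp_id _)
        (by exact (congrArg (T'.mor₃ ≫ ·) (CategoryTheory.Functor.map_id _ _)).trans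
              ((Category.comp_id _).trans (Category.id_comp _).symm)))
  · exact mem_le_iso w ((shiftFunctorAdd' C (-1) (p+1) p (by ring)).symm.app d.A) d.hA
  · have h : p + 1 - 1 = p := by ring
    rw [h]
    exact mem_ge_iso w ((shiftFunctorAdd' C (-1) p (p-1) (by ring)).symm.app d.B) d.hB

/-- A decomposition at level 0, from the axiom. -/
noncomputable def dec0 (X : C) : Dec w 0 X := by
  have h := (w.decomp X).choose_spec.choose_spec.choose_spec.choose_spec.choose_spec
  exact
    { A := (w.decomp X).choose
      B := (w.decomp X).choose_spec.choose
      α := (w.decomp X).choose_spec.choose_spec.choose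
      β := (w.decomp X).choose_spec.choose_spec.choose_spec.choose
      δ := (w.decomp X).choose_spec.choose_spec.choose_spec.choose_spec.choose
      dist := h.1
      hA := mem_le_iso w ((shiftFunctorZero C ℤ).app _) h.2.1
      hB := by
        have : (0:ℤ) - 1 = -1 := by ring
        rw [this]; exact h.2.2 }

noncomputable def d1 (X : C) : Dec w 1 X := by
  have := (dec0 w (X⟦(1:ℤ)⟧)).ofShift
  rw [zero_add] at this
  exact this

noncomputable def d2 (X : C) : Dec w 2 X := by
  have := (d1 w (X⟦(1:ℤ)⟧)).ofShift
  rw [show (1:ℤ)+1 = 2 by ring] at this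
  exact this


section Ops

variable {w}

-- handy membership forms
lemma geBb (X : C) : (d1 w X).B ∈ w.ge := by
  have h := (d1 w X).hB
  rw [show (1:ℤ) - 1 = 0 by ring] at h
  exact mem_ge_iso w ((shiftFunctorZero C ℤ).app _).symm h

lemma geBb0 (X : C) : ((d1 w X).B)⟦(0:ℤ)⟧ ∈ w.ge := by
  have h := (d1 w X).hB
  rwa [show (1:ℤ) - 1 = 0 by ring] at h

lemma geBh1 (X : C) : ((d2 w X).B)⟦(1:ℤ)⟧ ∈ w.ge := by
  have h := (d2 w X).hB
  rwa [show (2:ℤ) - 1 = 1 by ring] at h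

lemma ge_shift0 {G : C} (h : G ∈ w.ge) : G⟦(0:ℤ)⟧ ∈ w.ge :=
  mem_ge_iso w ((shiftFunctorZero C ℤ).app G) h

lemma leA2shift (X : C) : (((d2 w X).A)⟦(1:ℤ)⟧)⟦(1:ℤ)⟧ ∈ w.le :=
  mem_le_iso w ((shiftFunctorAdd' C 1 1 2 (by ring)).symm.app _) (d2 w X).hA

/-- uniqueness of maps out of `B̂ X` into `w.ge`-objects, relative to `β̂`. -/
lemma uniq {X W : C} (hW : W ∈ w.ge) (t : (d2 w X).B ⟶ W)
    (ht : (d2 w X).β ≫ t = 0) : t = 0 := by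
  obtain ⟨g, hg⟩ := Triangle.yoneda_exact₃ _ (d2 w X).dist t ht
  have : g = 0 := zmaster w (leA2shift X) (ge_shift0 hW) (by omega) g
  rw [hg, this, comp_zero]
  rfl

lemma uniq' {X W : C} (hW : W ∈ w.ge) {t t' : (d2 w X).B ⟶ W}
    (h : (d2 w X).β ≫ t = (d2 w X).β ≫ t') : t = t' := by
  have := uniq hW (t - t') (by rw [Preadditive.comp_sub, h, sub_self])
  rwa [sub_eq_zero] at this

/-- the canonical comparison `B̂ X ⟶ B̄ X`. -/
noncomputable def sh (w : WeightStructure C) (X : C) : (d2 w X).B ⟶ (d1 w X).B := by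
  have hz : (d2 w X).α ≫ (d1 w X).β = 0 :=
    zmaster w (d2 w X).hA (geBb0 X) (by omega) _
  exact (Triangle.yoneda_exact₂ _ (d2 w X).dist (d1 w X).β hz).choose

lemma sh_spec (X : C) : (d2 w X).β ≫ sh w X = (d1 w X).β := by
  have hz : (d2 w X).α ≫ (d1 w X).β = 0 :=
    zmaster w (d2 w X).hA (geBb0 X) (by omega) _
  exact (Triangle.yoneda_exact₂ _ (d2 w X).dist (d1 w X).β hz).choose_spec.symm

/-- a lift of `f` to the `B̂`-objects. -/
noncomputable def hlift (w : WeightStructure C) {X Y : C} (f : X ⟶ Y) :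
    (d2 w X).B ⟶ (d2 w Y).B := by
  have hz : (d2 w X).α ≫ (f ≫ (d2 w Y).β) = 0 :=
    zmaster w (d2 w X).hA (geBh1 Y) (by omega) _
  exact (Triangle.yoneda_exact₂ _ (d2 w X).dist (f ≫ (d2 w Y).β) hz).choose

lemma hlift_spec {X Y : C} (f : X ⟶ Y) :
    (d2 w X).β ≫ hlift w f = f ≫ (d2 w Y).β := by
  have hz : (d2 w X).α ≫ (f ≫ (d2 w Y).β) = 0 :=
    zmaster w (d2 w X).hA (geBh1 Y) (by omega) _
  exact (Triangle.yoneda_exact₂ _ (d2 w X).dist (f ≫ (d2 w Y).β) hz).choose_spec.symm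

noncomputable def tmap (w : WeightStructure C) {X Y : C} (f : X ⟶ Y) :
    (d2 w X).B ⟶ (d1 w Y).B := hlift w f ≫ sh w Y

lemma tmap_spec {X Y : C} (f : X ⟶ Y) :
    (d2 w X).β ≫ tmap w f = f ≫ (d1 w Y).β := by
  rw [tmap, ← Category.assoc, hlift_spec, Category.assoc, sh_spec]

lemma blift {X Y : C} (f : X ⟶ Y) :
    ∃ c : (d1 w X).B ⟶ (d1 w Y).B, (d1 w X).β ≫ c = f ≫ (d1 w Y).β := by
  have hz : (d1 w X).α ≫ (f ≫ (d1 w Y).β) = 0 :=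
    zmaster w (d1 w X).hA (geBb0 Y) (by omega) _
  obtain ⟨c, hc⟩ := Triangle.yoneda_exact₂ _ (d1 w X).dist (f ≫ (d1 w Y).β) hz
  exact ⟨c, hc.symm⟩

/-- `Q ∈ w.ge` iff it receives no maps from `w.le⟦-1⟧`. -/
lemma ge_char {Q : C} (h : ∀ (A : C), A⟦(1:ℤ)⟧ ∈ w.le → ∀ f : A ⟶ Q, f = 0) :
    Q ∈ w.ge := by
  have hα : (d1 w Q).α = 0 := h _ (d1 w Q).hA _
  obtain ⟨σ, hσ⟩ := Triangle.yoneda_exact₂ _ (d1 w Q).dist (𝟙 Q) (by show (d1 w Q).α ≫ 𝟙 Q = 0; rw [hα, zero_comp])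
  exact w.ge_retract ⟨(d1 w Q).β, σ, hσ.symm⟩ (geBb Q)

/-- `w.ge` is closed under extensions. -/
lemma ge_ext {T : Triangle C} (hT : T ∈ distTriang C)
    (h1 : T.obj₁ ∈ w.ge) (h3 : T.obj₃ ∈ w.ge) : T.obj₂ ∈ w.ge := by
  apply ge_char
  intro A hA f
  have h2 : f ≫ T.mor₂ = 0 := zmaster w hA (ge_shift0 h3) (by omega) _
  obtain ⟨g, hg⟩ := Triangle.coyoneda_exact₂ _ hT f h2
  have : g = 0 := zmaster w hA (ge_shift0 h1) (by omega) g
  rw [hg, this, zero_comp]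

end Ops

section Hfun

variable (M : C)
variable {w}

/-- precomposition as an additive hom. -/
noncomputable def preHom {A B : C} (c : A ⟶ B) : (B ⟶ M) →+ (A ⟶ M) :=
  AddMonoidHom.mk' (fun g => c ≫ g) (fun g g' => Preadditive.comp_add _ _ _ _ _ _)

@[simp] lemma preHom_apply {A B : C} (c : A ⟶ B) (g : B ⟶ M) : preHom M c g = c ≫ g := rfl

variable (w)

/-- The subgroup of `Hom(B̂ X, M)` of maps factoring through `sh`. -/
noncomputable def HS (X : C) : AddSubgroup ((d2 w X).B ⟶ M) :=
  AddMonoidHom.range (preHom M (sh w X))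

variable {w} {M}

lemma mem_HS {X : C} {h : (d2 w X).B ⟶ M} (hh : h ∈ HS w M X) :
    ∃ g : (d1 w X).B ⟶ M, sh w X ≫ g = h := hh

lemma mem_HS' {X : C} (g : (d1 w X).B ⟶ M) : sh w X ≫ g ∈ HS w M X := ⟨g, rfl⟩

lemma tmap_factor {X Y : C} (f : X ⟶ Y) :
    ∃ c : (d1 w X).B ⟶ (d1 w Y).B, tmap w f = sh w X ≫ c := by
  obtain ⟨c, hc⟩ := blift (w := w) f
  refine ⟨c, uniq' (geBb Y) ?_⟩
  rw [tmap_spec, ← Category.assoc, sh_spec, hc]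

lemma hlift_indep {X Y : C} (f : X ⟶ Y) (c : (d2 w X).B ⟶ (d2 w Y).B)
    (hc : (d2 w X).β ≫ c = f ≫ (d2 w Y).β) {h : (d2 w Y).B ⟶ M} (hh : h ∈ HS w M Y) :
    c ≫ h = hlift w f ≫ h := by
  obtain ⟨g, hg⟩ := mem_HS hh
  have key : c ≫ sh w Y = hlift w f ≫ sh w Y := by
    apply uniq' (geBb Y)
    rw [← Category.assoc, ← Category.assoc, hc, hlift_spec]
  rw [← hg, ← Category.assoc, ← Category.assoc, key]

lemma hlift_mem {X Y : C} (f : X ⟶ Y) {h : (d2 w Y).B ⟶ M} (hh : h ∈ HS w M Y) :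
    hlift w f ≫ h ∈ HS w M X := by
  obtain ⟨g, hg⟩ := mem_HS hh
  obtain ⟨c, hc⟩ := tmap_factor (w := w) f
  refine ⟨c ≫ g, ?_⟩
  have : tmap w f ≫ g = hlift w f ≫ h := by rw [tmap, Category.assoc, hg]
  rw [preHom_apply, ← Category.assoc, ← hc, this]

variable (w) (M)

/-- the underlying additive map of `Hfun` on a morphism `f : Y ⟶ X`. -/
noncomputable def mapHom {Y X : C} (f : Y ⟶ X) : HS w M X →+ HS w M Y :=
  AddMonoidHom.mk' (fun h => ⟨hlift w f ≫ h.1, hlift_mem f h.2⟩)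
    (fun h h' => by
      apply Subtype.ext
      simp [Preadditive.comp_add])

@[simp] lemma mapHom_apply {Y X : C} (f : Y ⟶ X) (h : HS w M X) :
    (mapHom w M f h).1 = hlift w f ≫ h.1 := rfl

/-- The virtual truncation functor. -/
noncomputable def Hfun : Cᵒᵖ ⥤ AddCommGrpCat.{v} where
  obj X := AddCommGrpCat.of (HS w M X.unop)
  map {X Y} f := AddCommGrpCat.ofHom (mapHom w M f.unop)
  map_id X := by
    ext h
    show hlift w (𝟙 X.unop) ≫ h.1 = h.1
    exact (hlift_indep (𝟙 X.unop) (𝟙 _) (by simp) h.2).symm.trans (Category.id_comp _)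
  map_comp {X Y Z} f g := by
    ext h
    show hlift w (g.unop ≫ f.unop) ≫ h.1 = hlift w g.unop ≫ hlift w f.unop ≫ h.1
    rw [← Category.assoc, hlift_indep (g.unop ≫ f.unop) (hlift w g.unop ≫ hlift w f.unop)
      (by rw [← Category.assoc, hlift_spec, Category.assoc, hlift_spec, ← Category.assoc]) h.2]

noncomputable instance Hfun_additive : (Hfun w M).Additive := by
  constructor
  intro X Y f g
  ext h
  apply Subtype.ext
  show hlift w (f + g).unop ≫ h.1 = hlift w f.unop ≫ h.1 + hlift w g.unop ≫ h.1
  have h3 : (f + g).unop = f.unop + g.unop := rfl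
  rw [h3]
  rw [← hlift_indep (f.unop + g.unop) (hlift w f.unop + hlift w g.unop)
    (by rw [Preadditive.comp_add, hlift_spec, hlift_spec, Preadditive.add_comp]) h.2]
  rw [Preadditive.add_comp]

/-- The heart of the matter: `Hfun` is cohomological. -/
lemma Hfun_core (T : Triangle C) (hT : T ∈ distTriang C)
    (h : HS w M T.obj₂) (hzero : hlift w T.mor₁ ≫ h.1 = 0) :
    ∃ h' : HS w M T.obj₃, hlift w T.mor₂ ≫ h'.1 = h.1 := by
  obtain ⟨g, hg⟩ := mem_HS h.2
  have htu : tmap w T.mor₁ ≫ g = 0 := by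
    rw [tmap, Category.assoc, hg]; exact hzero
  obtain ⟨Q, π, ρ, hQ⟩ := Pretriangulated.distinguished_cocone_triangle (tmap w T.mor₁)
  obtain ⟨gh, hgh⟩ : ∃ gh : Q ⟶ M, g = π ≫ gh := Triangle.yoneda_exact₂ _ hQ g htu
  have hQge : Q ∈ w.ge := ge_ext (rot_of_distTriang _ hQ) (geBb _) (geBh1 _)
  obtain ⟨γ, hγ₁, _⟩ := complete_distinguished_triangle_morphism T
    (Triangle.mk (tmap w T.mor₁) π ρ) hT hQ ((d2 w T.obj₁).β) ((d1 w T.obj₂).β)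
    (tmap_spec T.mor₁).symm
  have hαγ : (d1 w T.obj₃).α ≫ γ = 0 :=
    zmaster w (d1 w T.obj₃).hA (ge_shift0 hQge) (by omega) _
  obtain ⟨ξ, hξ⟩ : ∃ ξ : (d1 w T.obj₃).B ⟶ Q, γ = (d1 w T.obj₃).β ≫ ξ := Triangle.yoneda_exact₂ _ (d1 w T.obj₃).dist γ hαγ
  dsimp only [Triangle.mk] at hξ hgh hγ₁
  have hkey : tmap w T.mor₂ ≫ ξ = sh w T.obj₂ ≫ π := by
    apply uniq' hQge
    rw [← Category.assoc, tmap_spec, Category.assoc, ← hξ, ← Category.assoc, sh_spec]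
    exact hγ₁
  refine ⟨⟨sh w T.obj₃ ≫ (ξ ≫ gh), mem_HS' _⟩, ?_⟩
  show hlift w T.mor₂ ≫ sh w T.obj₃ ≫ ξ ≫ gh = h.1
  rw [← Category.assoc, ← tmap, ← Category.assoc, hkey, Category.assoc, ← hgh, hg]

lemma Hfun_cohomological : IsCohomological C (Hfun w M) := by
  intro T hT
  rw [ShortComplex.ab_exact_iff]
  intro x₂ hx₂
  have hval : hlift w T.mor₁ ≫ x₂.1 = 0 := congrArg Subtype.val hx₂
  obtain ⟨h', hh'⟩ := Hfun_core w M T hT x₂ hval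
  exact ⟨h', Subtype.ext hh'⟩

section CP

variable [HasCoproducts.{v} C]
variable (hw : ∀ {ι : Type v} (X : ι → C), (∀ i, X i ∈ w.ge) → (∐ X) ∈ w.ge)

include hw

lemma cp_exists {ι : Type v} (X : ι → C) (t : ∀ i, HS w M (X i)) :
    ∃ h : HS w M (∐ X), ∀ i, mapHom w M (Sigma.ι X i) h = t i := by
  classical
  set P : C := ∐ (fun i => (d1 w (X i)).B) with hPdef
  have hP : P ∈ w.ge := hw _ (fun i => geBb _)
  set bb : (∐ X) ⟶ P := Sigma.desc (fun i => (d1 w (X i)).β ≫ Sigma.ι (fun j => (d1 w (X j)).B) i) with hbb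
  -- lift bb through the chosen decompositions of ∐ X
  obtain ⟨r, hr⟩ : ∃ r, (d2 w (∐ X)).β ≫ r = bb := by
    obtain ⟨r, hr⟩ := Triangle.yoneda_exact₂ _ (d2 w (∐ X)).dist bb
      (zmaster w (d2 w (∐ X)).hA (ge_shift0 hP) (by omega) _)
    exact ⟨r, hr.symm⟩
  obtain ⟨r', hr'⟩ : ∃ r', (d1 w (∐ X)).β ≫ r' = bb := by
    obtain ⟨r', hr'⟩ := Triangle.yoneda_exact₂ _ (d1 w (∐ X)).dist bb
      (zmaster w (d1 w (∐ X)).hA (ge_shift0 hP) (by omega) _)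
    exact ⟨r', hr'.symm⟩
  have hrr' : r = sh w (∐ X) ≫ r' := by
    apply uniq' hP
    rw [hr, ← Category.assoc, sh_spec, hr']
  set g : ∀ i, (d1 w (X i)).B ⟶ M := fun i => (mem_HS (t i).2).choose with hgdef
  have hg : ∀ i, sh w (X i) ≫ g i = (t i).1 := fun i => (mem_HS (t i).2).choose_spec
  set gg : P ⟶ M := Sigma.desc g with hgg
  refine ⟨⟨r ≫ gg, by rw [hrr', Category.assoc]; exact mem_HS' _⟩, ?_⟩
  intro i
  apply Subtype.ext
  show hlift w (Sigma.ι X i) ≫ (r ≫ gg) = (t i).1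
  have hlr : hlift w (Sigma.ι X i) ≫ r = sh w (X i) ≫ Sigma.ι (fun i => (d1 w (X i)).B) i := by
    apply uniq' hP
    rw [← Category.assoc, hlift_spec, Category.assoc, hr, ← Category.assoc, sh_spec, hbb,
      Sigma.ι_desc]
  rw [← Category.assoc, hlr, Category.assoc, hgg, Sigma.ι_desc, hg]

lemma cp_inj {ι : Type v} (X : ι → C) (h : HS w M (∐ X))
    (h0 : ∀ i, hlift w (Sigma.ι X i) ≫ h.1 = 0) : h.1 = 0 := by
  classical
  obtain ⟨g, hg⟩ := mem_HS h.2
  set P : C := ∐ (fun i => (d1 w (X i)).B) with hPdef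
  have hP : P ∈ w.ge := hw _ (fun i => geBb _)
  set bb : (∐ X) ⟶ P := Sigma.desc (fun i => (d1 w (X i)).β ≫ Sigma.ι (fun j => (d1 w (X j)).B) i) with hbb
  obtain ⟨r, hr⟩ : ∃ r, (d2 w (∐ X)).β ≫ r = bb := by
    obtain ⟨r, hr⟩ := Triangle.yoneda_exact₂ _ (d2 w (∐ X)).dist bb
      (zmaster w (d2 w (∐ X)).hA (ge_shift0 hP) (by omega) _)
    exact ⟨r, hr.symm⟩
  set cb : P ⟶ (d1 w (∐ X)).B := Sigma.desc (fun i => (blift (w := w) (Sigma.ι X i)).choose)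
    with hcb
  have hcbi : ∀ i, (d1 w (X i)).β ≫ (blift (w := w) (Sigma.ι X i)).choose
      = Sigma.ι X i ≫ (d1 w (∐ X)).β := fun i => (blift (w := w) (Sigma.ι X i)).choose_spec
  have hrc : r ≫ cb = sh w (∐ X) := by
    apply uniq' (geBb _)
    rw [← Category.assoc, hr, sh_spec]
    apply Sigma.hom_ext
    intro i
    rw [← Category.assoc, hbb, Sigma.ι_desc, Category.assoc, hcb, Sigma.ι_desc, hcbi]
  set BhP : C := ∐ (fun i => (d2 w (X i)).B) with hBhP
  set sP : BhP ⟶ P := Sigma.desc (fun i => sh w (X i) ≫ Sigma.ι (fun j => (d1 w (X j)).B) i) with hsP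
  have e1 : ∀ i, Sigma.ι (fun j => (d2 w (X j)).B) i ≫ sP
      = sh w (X i) ≫ Sigma.ι (fun j => (d1 w (X j)).B) i := by
    intro i; rw [hsP, Sigma.ι_desc]
  have e2 : ∀ i, Sigma.ι (fun j => (d1 w (X j)).B) i ≫ cb
      = (blift (w := w) (Sigma.ι X i)).choose := by
    intro i; rw [hcb, Sigma.ι_desc]
  have hfact : ∀ i, sh w (X i) ≫ (blift (w := w) (Sigma.ι X i)).choose
      = tmap w (Sigma.ι X i) := by
    intro i
    apply uniq' (geBb _)
    rw [← Category.assoc, sh_spec, hcbi, tmap_spec]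
  have hsc : sP ≫ (cb ≫ g) = 0 := by
    apply Sigma.hom_ext
    intro i
    rw [comp_zero, ← Category.assoc, e1, Category.assoc,
      ← Category.assoc (Sigma.ι (fun j => (d1 w (X j)).B) i), e2,
      ← Category.assoc, hfact, tmap, Category.assoc, hg]
    exact h0 i
  obtain ⟨K, qk, rk, hK⟩ := Pretriangulated.distinguished_cocone_triangle sP
  obtain ⟨k, hk⟩ : ∃ k : K ⟶ M, cb ≫ g = qk ≫ k := Triangle.yoneda_exact₂ _ hK (cb ≫ g) hsc
  have hKge : K ∈ w.ge := by
    refine ge_ext (rot_of_distTriang _ hK) hP ?_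
    show BhP⟦(1:ℤ)⟧ ∈ w.ge
    have hcomp : (∐ (fun i => ((d2 w (X i)).B)⟦(1:ℤ)⟧)) ∈ w.ge := hw _ (fun i => geBh1 _)
    exact mem_ge_iso w
      (asIso (sigmaComparison (shiftFunctor C (1:ℤ)) (fun i => (d2 w (X i)).B))).symm hcomp
  have hz : sP ≫ qk = 0 := by
    have := comp_distTriang_mor_zero₁₂ _ hK
    dsimp only [Triangle.mk] at this
    exact this
  have hrqk : r ≫ qk = 0 := by
    apply uniq hKge
    rw [← Category.assoc, hr]
    apply Sigma.hom_ext
    intro i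
    have h1 : sh w (X i) ≫ Sigma.ι (fun j => (d1 w (X j)).B) i ≫ qk = 0 := by
      calc sh w (X i) ≫ Sigma.ι (fun j => (d1 w (X j)).B) i ≫ qk
          = (Sigma.ι (fun j => (d2 w (X j)).B) i ≫ sP) ≫ qk := by
            rw [e1, Category.assoc]
        _ = Sigma.ι (fun j => (d2 w (X j)).B) i ≫ (sP ≫ qk) := by rw [Category.assoc]
        _ = 0 := by rw [hz, comp_zero]
    rw [comp_zero, ← Category.assoc, hbb, Sigma.ι_desc, Category.assoc, ← sh_spec,
      Category.assoc, h1, comp_zero]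
  rw [← hg, ← hrc, Category.assoc, hk, ← Category.assoc, hrqk, zero_comp]

lemma cp_unique {ι : Type v} (X : ι → C) (a b : HS w M (∐ X))
    (hab : ∀ i, mapHom w M (Sigma.ι X i) a = mapHom w M (Sigma.ι X i) b) : a = b := by
  have hsub : ∀ i, hlift w (Sigma.ι X i) ≫ (a - b).1 = 0 := by
    intro i
    have hv : (a - b).1 = a.1 - b.1 := rfl
    rw [hv, Preadditive.comp_sub]
    have h1 : hlift w (Sigma.ι X i) ≫ a.1 = hlift w (Sigma.ι X i) ≫ b.1 :=
      congrArg Subtype.val (hab i)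
    rw [h1, sub_self]
  have h2 : a.1 - b.1 = 0 := cp_inj w M hw X (a - b) hsub
  exact Subtype.ext (by rw [← sub_eq_zero]; exact h2)

lemma Hfun_cp (ι : Type v) : PreservesLimitsOfShape (Discrete ι) (Hfun w M) := by
  classical
  constructor
  intro K
  let Y : ι → Cᵒᵖ := fun i => K.obj ⟨i⟩
  let X : ι → C := fun i => (Y i).unop
  have hPL : PreservesLimit (Discrete.functor Y) (Hfun w M) := by
    let fan : Fan Y := Fan.mk (op (∐ X)) (fun i => (Sigma.ι X i).op)
    have hfan : IsLimit fan := by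
      refine mkFanLimit fan (fun s => (Sigma.desc (fun i => (s.proj i).unop)).op)
        (fun s i => ?_) (fun s m hm => ?_)
      · show (Sigma.desc (fun i => (s.proj i).unop)).op ≫ (Sigma.ι X i).op = s.proj i
        rw [← op_comp, Sigma.ι_desc]
        exact Quiver.Hom.op_unop _
      · apply Quiver.Hom.unop_inj
        apply Sigma.hom_ext
        intro i
        have h2 := congrArg Quiver.Hom.unop (hm i)
        rw [unop_comp] at h2
        show Sigma.ι X i ≫ m.unop = Sigma.ι X i ≫ Sigma.desc (fun i => (s.proj i).unop)
        rw [Sigma.ι_desc]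
        exact h2
    apply preservesLimit_of_preserves_limit_cone hfan
    have spec : ∀ (s : Cone (Discrete.functor Y ⋙ Hfun w M)) (x : s.pt), ∀ i,
        mapHom w M (Sigma.ι X i) ((cp_exists w M hw X
          (fun i => s.π.app ⟨i⟩ x)).choose) = s.π.app ⟨i⟩ x :=
      fun s x => (cp_exists w M hw X (fun i => s.π.app ⟨i⟩ x)).choose_spec
    refine IsLimit.mk (fun s => AddCommGrpCat.ofHom (AddMonoidHom.mk'
        (fun x => (cp_exists w M hw X (fun i => s.π.app ⟨i⟩ x)).choose) ?_))
      (fun s j => ?_) (fun s m hm => ?_)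
    · intro x y
      apply cp_unique w M hw X
      intro i
      have h1 := congrArg₂ (· + ·) (spec s x i) (spec s y i)
      have h2 := map_add (s.π.app ⟨i⟩).hom x y
      exact (spec s (x + y) i).trans
        (h2.trans (h1.symm.trans (map_add _ _ _).symm))
    · obtain ⟨i⟩ := j
      ext x
      exact spec s x i
    · ext x
      apply cp_unique w M hw X
      intro i
      have hmx := ConcreteCategory.congr_hom (hm ⟨i⟩) x
      exact hmx.trans (spec s x i).symm
  haveI := hPL
  exact preservesLimit_of_iso_diagram (Hfun w M)
    (Discrete.natIso (fun i => Iso.refl _) : Discrete.functor Y ≅ K)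

end CP

section Assemble

variable {M : C}

lemma theta_val {L : C} (Θ : preadditiveYoneda.obj L ≅ Hfun w M)
    {T : C} (f : T ⟶ L) :
    (Θ.hom.app (op T) f).1 = hlift w f ≫ (Θ.hom.app (op L) (𝟙 L)).1 := by
  have hnat := ConcreteCategory.congr_hom (Θ.hom.naturality f.op) (𝟙 L)
  have hL : ((preadditiveYoneda.obj L).map f.op ≫ Θ.hom.app (op T)) (𝟙 L)
      = Θ.hom.app (op T) (f ≫ 𝟙 L) := rfl
  have hR : (Θ.hom.app (op L) ≫ (Hfun w M).map f.op) (𝟙 L)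
      = (Hfun w M).map f.op (Θ.hom.app (op L) (𝟙 L)) := rfl
  rw [hL, hR, Category.comp_id] at hnat
  rw [hnat]
  rfl

lemma theta_zero {L : C} (Θ : preadditiveYoneda.obj L ≅ Hfun w M)
    {T : C} (f : T ⟶ L) (h : Θ.hom.app (op T) f = 0) : f = 0 := by
  have h1 := ConcreteCategory.congr_hom (Θ.hom_inv_id_app (op T)) f
  have h2 : Θ.inv.app (op T) (Θ.hom.app (op T) f) = f := h1
  rw [h, map_zero] at h2
  exact h2.symm

end Assemble

end Hfun

end RightAdjacentAux

open RightAdjacentAux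

/-- Brown representability + smashing weight structure ⟹ existence of a right adjacent
t-structure. -/
theorem exists_right_adjacent_tStructure [HasCoproducts.{v} C]
    (brown : ∀ (H : Cᵒᵖ ⥤ AddCommGrpCat.{v}) [H.Additive], IsCohomological C H →
      (∀ ι : Type v, PreservesLimitsOfShape (Discrete ι) H) →
      ∃ X : C, Nonempty (preadditiveYoneda.obj X ≅ H))
    (w : WeightStructure C)
    (hw : ∀ {ι : Type v} (X : ι → C), (∀ i, X i ∈ w.ge) → (∐ X) ∈ w.ge) :
    ∃ t : HomTStructure C, t.ge = w.ge := by
  refine ⟨{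
    le := {Y : C | ∀ X : C, X⟦(-1 : ℤ)⟧ ∈ w.ge → ∀ f : X ⟶ Y, f = 0}
    ge := w.ge
    le_iso := ?_
    ge_iso := ?_
    le_shift := ?_
    ge_shift := w.ge_shift
    orth := ?_
    decomp := ?_ }, rfl⟩
  · intro X Y e hY Z hZ f
    have h0 := hY Z hZ (f ≫ e.hom)
    have : f = (f ≫ e.hom) ≫ e.inv := by rw [Category.assoc, e.hom_inv_id, Category.comp_id]
    rw [this, h0, zero_comp]
  · intro X Y e h
    exact mem_ge_iso w e h
  · intro Y hY Z hZ f
    set eY : (Y⟦(-1:ℤ)⟧)⟦(1:ℤ)⟧ ≅ Y := (shiftFunctorCompIsoId C (-1:ℤ) (1:ℤ) (by ring)).app Y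
    set g : Z⟦(1:ℤ)⟧ ⟶ Y := (shiftFunctor C (1:ℤ)).map f ≫ eY.hom
    have hZ1 : (Z⟦(1:ℤ)⟧)⟦(-1:ℤ)⟧ ∈ w.ge := by
      refine mem_ge_iso w (((shiftFunctorCompIsoId C (1:ℤ) (-1:ℤ) (by ring)).app Z) ≪≫
        ((shiftFunctorCompIsoId C (-1:ℤ) (1:ℤ) (by ring)).app Z).symm) (w.ge_shift _ hZ)
    have hg : g = 0 := hY (Z⟦(1:ℤ)⟧) hZ1 g
    have hfz : (shiftFunctor C (1:ℤ)).map f = 0 := by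
      have : (shiftFunctor C (1:ℤ)).map f = g ≫ eY.inv := by
        rw [show g = (shiftFunctor C (1:ℤ)).map f ≫ eY.hom from rfl, Category.assoc,
          eY.hom_inv_id, Category.comp_id]
      rw [this, hg, zero_comp]
    exact (shiftFunctor C (1:ℤ)).map_injective (by simpa using hfz)
  · intro X Y hX hY f
    exact hY X hX f
  · intro M
    haveI : (Hfun w M).Additive := Hfun_additive w M
    obtain ⟨L, ⟨Θ⟩⟩ := brown (Hfun w M) (Hfun_cohomological w M) (fun ι => Hfun_cp w M hw ι)
    set η : (d2 w L).B ⟶ M := (Θ.hom.app (op L) (𝟙 L)).1 with hη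
    set φ : L ⟶ M := (d2 w L).β ≫ η with hφ
    have keyphi : ∀ (T : C) (f : T ⟶ L), f ≫ φ = (d2 w T).β ≫ (Θ.hom.app (op T) f).1 := by
      intro T f
      rw [theta_val w Θ f]
      show f ≫ ((d2 w L).β ≫ η) = (d2 w T).β ≫ hlift w f ≫ η
      rw [← Category.assoc, ← Category.assoc, hlift_spec]
    -- H vanishes on objects W with W⟦1⟧ ∈ w.le
    have hHzero : ∀ (W : C), W⟦(1:ℤ)⟧ ∈ w.le → ∀ (f : W ⟶ L), f = 0 := by
      intro W hW f
      have hβ : (d1 w W).β = 0 := zmaster w hW (geBb0 W) (by omega) _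
      have hs : sh w W = 0 := uniq (geBb W) _ (by rw [sh_spec, hβ])
      apply theta_zero w Θ f
      apply Subtype.ext
      obtain ⟨g, hg⟩ := mem_HS (Θ.hom.app (op W) f).2
      show (Θ.hom.app (op W) f).1 = 0
      rw [← hg, hs, zero_comp]
    have hL : L ∈ w.ge := by
      have hα : (d1 w L).α = 0 := hHzero _ (d1 w L).hA _
      obtain ⟨σ, hσ⟩ := Triangle.yoneda_exact₂ _ (d1 w L).dist (𝟙 L)
        (by show (d1 w L).α ≫ 𝟙 L = 0; rw [hα, zero_comp])
      dsimp only [Triangle.mk] at hσ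
      exact w.ge_retract ⟨(d1 w L).β, σ, hσ.symm⟩ (geBb L)
    have hsurj : ∀ (T : C), T ∈ w.ge → ∀ (z : T ⟶ M), ∃ t : T ⟶ L, t ≫ φ = z := by
      intro T hT z
      have hα : (d1 w T).α = 0 := zmaster w (d1 w T).hA (ge_shift0 hT) (by omega) _
      obtain ⟨σ, hσ⟩ : ∃ σ : (d1 w T).B ⟶ T, 𝟙 T = (d1 w T).β ≫ σ := Triangle.yoneda_exact₂ _ (d1 w T).dist (𝟙 T)
        (by show (d1 w T).α ≫ 𝟙 T = 0; rw [hα, zero_comp])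
      refine ⟨Θ.inv.app (op T) ⟨sh w T ≫ (σ ≫ z), mem_HS' _⟩, ?_⟩
      refine (keyphi _ _).trans ?_
      have h3 := ConcreteCategory.congr_hom (Θ.inv_hom_id_app (op T))
        (⟨sh w T ≫ (σ ≫ z), mem_HS' _⟩ : HS w M T)
      rw [show Θ.hom.app (op T) (Θ.inv.app (op T) ⟨sh w T ≫ (σ ≫ z), mem_HS' _⟩)
        = ⟨sh w T ≫ (σ ≫ z), mem_HS' _⟩ from h3]
      show (d2 w T).β ≫ sh w T ≫ σ ≫ z = z
      rw [← Category.assoc, sh_spec, ← Category.assoc, ← hσ, Category.id_comp]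
    have hinj : ∀ (T : C), T⟦(1:ℤ)⟧ ∈ w.ge → ∀ (f : T ⟶ L), f ≫ φ = 0 → f = 0 := by
      intro T hT f hf
      have hval : (d2 w T).β ≫ (Θ.hom.app (op T) f).1 = 0 := by
        rw [← keyphi]; exact hf
      obtain ⟨g, hg⟩ := mem_HS (Θ.hom.app (op T) f).2
      have hα : (d2 w T).α = 0 := zmaster w (d2 w T).hA hT (by omega) _
      have hrot := rot_of_distTriang _ (d2 w T).dist
      obtain ⟨ι', hι⟩ : ∃ ι' : (d2 w T).A⟦(1:ℤ)⟧ ⟶ (d2 w T).B, 𝟙 _ = ι' ≫ (d2 w T).δ := Triangle.coyoneda_exact₃ _ hrot (𝟙 ((d2 w T).A⟦(1:ℤ)⟧)) (by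
        show 𝟙 _ ≫ (Triangle.mk (d2 w T).α (d2 w T).β (d2 w T).δ).rotate.mor₃ = 0
        show 𝟙 _ ≫ (-(shiftFunctor C (1:ℤ)).map (d2 w T).α) = 0
        rw [hα, Functor.map_zero, neg_zero, comp_zero])
      obtain ⟨e, he⟩ : ∃ e : (d2 w T).A⟦(1:ℤ)⟧ ⟶ M, (Θ.hom.app (op T) f).1 = (d2 w T).δ ≫ e := Triangle.yoneda_exact₃ _ (d2 w T).dist (Θ.hom.app (op T) f).1
        (by exact hval)
      have hι' : 𝟙 ((d2 w T).A⟦(1:ℤ)⟧) = ι' ≫ (d2 w T).δ := by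
        simpa [Triangle.rotate] using hι
      have hιs : ι' ≫ sh w T = 0 := zmaster w (leA2shift T) (geBb0 T) (by omega) _
      have he0 : e = 0 := by
        have h4 : ι' ≫ (Θ.hom.app (op T) f).1 = e := by
          rw [he, ← Category.assoc, ← hι', Category.id_comp]
        have h5 : ι' ≫ (Θ.hom.app (op T) f).1 = 0 := by
          rw [← hg, ← Category.assoc, hιs, zero_comp]
        rw [← h4, h5]
      apply theta_zero w Θ f
      apply Subtype.ext
      show (Θ.hom.app (op T) f).1 = 0
      rw [he, he0, comp_zero]
    obtain ⟨R, ρ, σr, hTR⟩ := Pretriangulated.distinguished_cocone_triangle φ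
    have hHomR : ∀ (T : C), T ∈ w.ge → ∀ (x : T ⟶ R), x = 0 := by
      intro T hT x
      have hy : x ≫ σr = 0 := by
        set κL : (L⟦(1:ℤ)⟧)⟦(-1:ℤ)⟧ ≅ L :=
          (shiftFunctorCompIsoId C (1:ℤ) (-1:ℤ) (by ring)).app L with hκL
        set f' : T⟦(-1:ℤ)⟧ ⟶ L := (shiftFunctor C (-1:ℤ)).map (x ≫ σr) ≫ κL.hom with hf'
        have hTge : (T⟦(-1:ℤ)⟧)⟦(1:ℤ)⟧ ∈ w.ge :=
          mem_ge_iso w ((shiftFunctorCompIsoId C (-1:ℤ) (1:ℤ) (by ring)).app T) hT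
        have hz : (x ≫ σr) ≫ (shiftFunctor C (1:ℤ)).map φ = 0 := by
          have h7 : σr ≫ (shiftFunctor C (1:ℤ)).map φ = 0 := comp_distTriang_mor_zero₃₁ _ hTR
          rw [Category.assoc, h7, comp_zero]
        have hcomp : f' ≫ φ = 0 := by
          have hn : κL.hom ≫ φ = (shiftFunctor C (-1:ℤ)).map ((shiftFunctor C (1:ℤ)).map φ) ≫
              (shiftFunctorCompIsoId C (1:ℤ) (-1:ℤ) (by ring)).hom.app M := by
            rw [hκL]
            have hh := (shiftFunctorCompIsoId C (1:ℤ) (-1:ℤ) (by ring)).hom.naturality φ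
            simp only [Functor.id_map, Functor.comp_map] at hh
            exact hh.symm
          calc f' ≫ φ
              = (shiftFunctor C (-1:ℤ)).map (x ≫ σr) ≫ (κL.hom ≫ φ) := by
                rw [hf', Category.assoc]
            _ = ((shiftFunctor C (-1:ℤ)).map (x ≫ σr) ≫
                  (shiftFunctor C (-1:ℤ)).map ((shiftFunctor C (1:ℤ)).map φ)) ≫
                  (shiftFunctorCompIsoId C (1:ℤ) (-1:ℤ) (by ring)).hom.app M := by
                rw [hn, Category.assoc]
            _ = (shiftFunctor C (-1:ℤ)).map ((x ≫ σr) ≫ (shiftFunctor C (1:ℤ)).map φ) ≫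
                  (shiftFunctorCompIsoId C (1:ℤ) (-1:ℤ) (by ring)).hom.app M := by
                rw [← Functor.map_comp]
            _ = 0 := by rw [hz, Functor.map_zero, zero_comp]
        have hf0 : f' = 0 := hinj _ hTge f' hcomp
        have h8 : (shiftFunctor C (-1:ℤ)).map (x ≫ σr) = 0 := by
          have : (shiftFunctor C (-1:ℤ)).map (x ≫ σr) = f' ≫ κL.inv := by
            rw [hf', Category.assoc, κL.hom_inv_id, Category.comp_id]
          rw [this, hf0, zero_comp]
        exact (shiftFunctor C (-1:ℤ)).map_injective (by simpa using h8)
      obtain ⟨z, hzx⟩ := Triangle.coyoneda_exact₃ _ hTR x (by exact hy)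
      dsimp only [Triangle.mk] at hzx
      obtain ⟨t, ht⟩ := hsurj T hT z
      have h9 : φ ≫ ρ = 0 := comp_distTriang_mor_zero₁₂ _ hTR
      rw [hzx, ← ht, Category.assoc, h9, comp_zero]
    refine ⟨L, R, φ, ρ, σr, hTR, hL, ?_⟩
    intro X hX f
    set eR : (R⟦(1:ℤ)⟧)⟦(-1:ℤ)⟧ ≅ R :=
      (shiftFunctorCompIsoId C (1:ℤ) (-1:ℤ) (by ring)).app R with heR
    have hf' : (shiftFunctor C (-1:ℤ)).map f ≫ eR.hom = 0 := hHomR _ hX _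
    have h10 : (shiftFunctor C (-1:ℤ)).map f = 0 := by
      have : (shiftFunctor C (-1:ℤ)).map f
          = ((shiftFunctor C (-1:ℤ)).map f ≫ eR.hom) ≫ eR.inv := by
        rw [Category.assoc, eR.hom_inv_id, Category.comp_id]
      rw [this, hf', zero_comp]
    exact (shiftFunctor C (-1:ℤ)).map_injective (by simpa using h10)
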